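/- L2 bounds for the direct backstepping transformation: let A be a real n x n matrix, B in R^n, K a 1 x n row vector, and D_hat > 0. There exist positive constants N3 and N4 (depending only on A, B, K, D_hat) such that for every X in R^n and every continuously differentiable u_hat : [0,1] -> R, the function w_hat(x) = u_hat(x) - K e^{A D_hat x} X - D_hat * integral from 0 to x of K e^{A D_hat (x - y)} B u_hat(y) dy satisfies integral from 0 to 1 of w_hat(x)^2 dx <= N3 * ( |X|^2 + integral from 0 to 1 of u_hat(x)^2 dx ) and integral from 0 to 1 of (w_hat'(x))^2 dx <= N4 * ( |X|^2 + integral from 0 to 1 of u_hat(x)^2 dx + integral from 0 to 1 of (u_hat'(x))^2 dx ). -/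

import Mathlib

open Matrix MeasureTheory intervalIntegral Set

noncomputable section

lemma entry_hasDerivAt {n : ℕ} (A : Matrix (Fin n) (Fin n) ℝ) (c : ℝ) (i j : Fin n) (x : ℝ) :
    HasDerivAt (fun t : ℝ => (NormedSpace.exp ((c * t) • A)) i j)
      (c * ((A * NormedSpace.exp ((c * x) • A)) i j)) x := by
  letI : SeminormedRing (Matrix (Fin n) (Fin n) ℝ) := Matrix.linftyOpSemiNormedRing
  letI : NormedRing (Matrix (Fin n) (Fin n) ℝ) := Matrix.linftyOpNormedRing
  letI : NormedAlgebra ℝ (Matrix (Fin n) (Fin n) ℝ) := Matrix.linftyOpNormedAlgebra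
  have h1 : HasDerivAt (fun t : ℝ => NormedSpace.exp (t • A))
      (A * NormedSpace.exp ((c * x) • A)) (c * x) :=
    hasDerivAt_exp_smul_const' A (c * x)
  have h2 : HasDerivAt (fun t : ℝ => c * t) c x := by
    simpa using (hasDerivAt_id x).const_mul c
  have h3 : HasDerivAt (fun t : ℝ => NormedSpace.exp ((c * t) • A))
      (c • (A * NormedSpace.exp ((c * x) • A))) x := by
    exact (h1.scomp x h2)
  have hL : IsLinearMap ℝ (fun M : Matrix (Fin n) (Fin n) ℝ => M i j) :=
    ⟨fun a b => rfl, fun r a => rfl⟩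
  have := ((hL.mk' _).toContinuousLinearMap.hasFDerivAt.comp_hasDerivAt x h3)
  exact this

lemma entry_continuous {n : ℕ} (A : Matrix (Fin n) (Fin n) ℝ) (c : ℝ) (i j : Fin n) :
    Continuous (fun t : ℝ => (NormedSpace.exp ((c * t) • A)) i j) :=
  continuous_iff_continuousAt.2 fun x => (entry_hasDerivAt A c i j x).continuousAt

lemma bound_on_Icc (f : ℝ → ℝ) (hf : Continuous f) :
    ∃ C : ℝ, 0 < C ∧ ∀ x ∈ Icc (0:ℝ) 1, |f x| ≤ C := by
  obtain ⟨C, hC⟩ := isCompact_Icc.exists_bound_of_continuousOn (f := f) hf.continuousOn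
  refine ⟨max C 1, lt_of_lt_of_le one_pos (le_max_right _ _), fun x hx => ?_⟩
  simpa [Real.norm_eq_abs] using (hC x hx).trans (le_max_left _ _)

lemma bound_entries {n : ℕ} (f : ℝ → Matrix (Fin n) (Fin n) ℝ)
    (hf : ∀ i j, Continuous fun x => f x i j) :
    ∃ C : ℝ, 0 < C ∧ ∀ x ∈ Icc (0:ℝ) 1, ∀ i j, |f x i j| ≤ C := by
  obtain ⟨C, hC0, hC⟩ := bound_on_Icc (fun x => ∑ i, ∑ j, |f x i j|)
    (by exact continuous_finset_sum _ fun i _ => continuous_finset_sum _ fun j _ => (hf i j).abs)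
  refine ⟨C, hC0, fun x hx i j => ?_⟩
  have h1 : |f x i j| ≤ ∑ i, ∑ j, |f x i j| := by
    calc |f x i j| ≤ ∑ j, |f x i j| :=
          Finset.single_le_sum (f := fun j => |f x i j|) (fun _ _ => abs_nonneg _)
            (Finset.mem_univ j)
      _ ≤ ∑ i, ∑ j, |f x i j| :=
          Finset.single_le_sum (f := fun i => ∑ j, |f x i j|)
            (fun _ _ => Finset.sum_nonneg fun _ _ => abs_nonneg _) (Finset.mem_univ i)
  exact h1.trans ((le_abs_self _).trans (hC x hx))

lemma sq_integral_abs_le (f : ℝ → ℝ) (hf : Continuous f) :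
    (∫ x in (0:ℝ)..1, |f x|) ^ 2 ≤ ∫ x in (0:ℝ)..1, (f x) ^ 2 := by
  set I1 := ∫ x in (0:ℝ)..1, |f x| with hI1def
  set I2 := ∫ x in (0:ℝ)..1, (f x) ^ 2 with hI2def
  have hI2 : 0 ≤ I2 := intervalIntegral.integral_nonneg (by norm_num) fun x _ => sq_nonneg _
  have hI1 : 0 ≤ I1 := intervalIntegral.integral_nonneg (by norm_num) fun x _ => abs_nonneg _
  have key : ∀ t : ℝ, 0 < t → I1 ≤ (t * I2 + 1 / t) / 2 := by
    intro t ht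
    have htinv : t * (1 / t) = 1 := by field_simp
    have hpt : ∀ x ∈ Icc (0:ℝ) 1, |f x| ≤ (t * (f x) ^ 2 + 1 / t) / 2 := by
      intro x _
      have h3 : 2 * t * |f x| ≤ t ^ 2 * (f x) ^ 2 + 1 := by
        nlinarith [sq_nonneg (t * |f x| - 1), sq_abs (f x)]
      rw [le_div_iff₀ (by norm_num : (0:ℝ) < 2), ← sub_nonneg]
      have heq : t * (f x) ^ 2 + 1 / t - |f x| * 2
          = (t ^ 2 * (f x) ^ 2 + 1 - 2 * t * |f x|) / t := by
        field_simp
      rw [heq]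
      apply div_nonneg (by linarith) ht.le
    calc I1 ≤ ∫ x in (0:ℝ)..1, (t * (f x) ^ 2 + 1 / t) / 2 := by
          apply intervalIntegral.integral_mono_on (by norm_num)
            (hf.abs.intervalIntegrable 0 1)
            (Continuous.intervalIntegrable (by continuity) 0 1) hpt
      _ = (t * I2 + 1 / t) / 2 := by
          rw [intervalIntegral.integral_div]
          rw [intervalIntegral.integral_add (f := fun x => t * f x ^ 2) (g := fun _ => 1 / t) ((continuous_const.mul (hf.pow 2)).intervalIntegrable 0 1)
            (intervalIntegrable_const)]
          rw [intervalIntegral.integral_const_mul]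
          simp
          exact Or.inl rfl
  rcases eq_or_lt_of_le hI2 with h0 | h0
  · rcases eq_or_lt_of_le hI1 with h1 | h1
    · simp [← h1, ← h0]
    · exfalso
      have := key (1 / I1) (by positivity)
      rw [← h0] at this
      field_simp at this
      nlinarith
  · have hs : Real.sqrt I2 * Real.sqrt I2 = I2 := Real.mul_self_sqrt hI2
    have hspos : 0 < Real.sqrt I2 := Real.sqrt_pos.2 h0
    have hkey := key (1 / Real.sqrt I2) (by positivity)
    have hI1le : I1 ≤ Real.sqrt I2 := by
      have h1 : (1 / Real.sqrt I2) * I2 = Real.sqrt I2 := by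
        rw [one_div, inv_mul_eq_div, div_eq_iff hspos.ne']
        exact hs.symm
      rw [h1] at hkey
      have h2 : 1 / (1 / Real.sqrt I2) = Real.sqrt I2 := by field_simp
      rw [h2] at hkey
      linarith
    nlinarith

lemma prod_bd (k e v Eb Vb : ℝ) (he : |e| ≤ Eb) (hv : |v| ≤ Vb) :
    |k * e * v| ≤ |k| * (Eb * Vb) := by
  rw [abs_mul, abs_mul, mul_assoc]
  exact mul_le_mul_of_nonneg_left
    (mul_le_mul he hv (abs_nonneg v) ((abs_nonneg e).trans he)) (abs_nonneg k)

set_option maxHeartbeats 1600000 in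
/-- L² bounds for the direct backstepping transformation (Lemma 12). -/
theorem direct_backstepping_L2_bounds
    (n : ℕ) (A : Matrix (Fin n) (Fin n) ℝ) (B K : Fin n → ℝ) (D : ℝ) (hD : 0 < D) :
    ∃ N3 N4 : ℝ, 0 < N3 ∧ 0 < N4 ∧
      ∀ (X : Fin n → ℝ) (uh : ℝ → ℝ), ContDiff ℝ 1 uh →
        ∀ wh : ℝ → ℝ,
          (∀ x, wh x = uh x
            - K ⬝ᵥ (NormedSpace.exp ((D * x) • A)).mulVec X
            - D * ∫ y in (0 : ℝ)..x,
                (K ⬝ᵥ (NormedSpace.exp ((D * (x - y)) • A)).mulVec B) * uh y) →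
          (∫ x in (0 : ℝ)..1, (wh x) ^ 2)
              ≤ N3 * ((∑ i, (X i) ^ 2) + ∫ x in (0 : ℝ)..1, (uh x) ^ 2)
          ∧ (∫ x in (0 : ℝ)..1, (deriv wh x) ^ 2)
              ≤ N4 * ((∑ i, (X i) ^ 2) + (∫ x in (0 : ℝ)..1, (uh x) ^ 2)
                  + ∫ x in (0 : ℝ)..1, (deriv uh x) ^ 2) := by
  classical
  have hAE_cont : ∀ i j, Continuous fun x : ℝ => (A * NormedSpace.exp ((D * x) • A)) i j := by
    intro i j
    have h : (fun x : ℝ => (A * NormedSpace.exp ((D * x) • A)) i j)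
        = fun x => ∑ k, A i k * (NormedSpace.exp ((D * x) • A)) k j := by
      funext x; simp [Matrix.mul_apply]
    rw [h]
    exact continuous_finset_sum _ fun k _ => continuous_const.mul (entry_continuous A D k j)
  obtain ⟨CE, hCE0, hCE⟩ := bound_entries (fun x => NormedSpace.exp ((D * x) • A))
    (fun i j => entry_continuous A D i j)
  obtain ⟨CS, hCS0, hCS⟩ := bound_entries (fun y => NormedSpace.exp ((-D * y) • A))
    (fun i j => entry_continuous A (-D) i j)
  obtain ⟨CA, hCA0, hCA⟩ := bound_entries (fun x => A * NormedSpace.exp ((D * x) • A)) hAE_cont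
  set kB := ∑ i, |K i| with hkBdef
  set bB := ∑ k, |B k| with hbBdef
  have hkB0 : 0 ≤ kB := Finset.sum_nonneg fun _ _ => abs_nonneg _
  have hbB0 : 0 ≤ bB := Finset.sum_nonneg fun _ _ => abs_nonneg _
  set c1 := kB * (n : ℝ) * CE with hc1def
  set c2 := D * (kB * (n : ℝ) * (CE * (CS * bB))) with hc2def
  set c3 := kB * (n : ℝ) * (D * CA) with hc3def
  set c4 := D * (kB * (n : ℝ) * ((D * CA) * (CS * bB))) with hc4def
  have hc1 : 0 ≤ c1 := by positivity
  have hc2 : 0 ≤ c2 := by positivity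
  have hc3 : 0 ≤ c3 := by positivity
  have hc4 : 0 ≤ c4 := by positivity
  refine ⟨3 + 3 * c1 ^ 2 * n + 3 * c2 ^ 2, 4 + 4 * c3 ^ 2 * n + 4 * c4 ^ 2 + 4 * c2 ^ 2,
    by positivity, by positivity, ?_⟩
  intro X uh huh wh hwh
  have huc : Continuous uh := huh.continuous
  have hucd : Continuous (deriv uh) := huh.continuous_deriv le_rfl
  set b : Fin n → ℝ → ℝ :=
    fun j y => uh y * ∑ k, (NormedSpace.exp ((-D * y) • A)) j k * B k with hbdef
  have hb_cont : ∀ j, Continuous (b j) := fun j =>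
    huc.mul (continuous_finset_sum _ fun k _ =>
      (entry_continuous A (-D) j k).mul continuous_const)
  set w : Fin n → ℝ → ℝ := fun j x => ∫ y in (0:ℝ)..x, b j y with hwdef
  have hw_deriv : ∀ j x, HasDerivAt (w j) (b j x) x := fun j x =>
    intervalIntegral.integral_hasDerivAt_right ((hb_cont j).intervalIntegrable 0 x)
      ((hb_cont j).stronglyMeasurableAtFilter _ _) (hb_cont j).continuousAt
  have hw_cont : ∀ j, Continuous (w j) := fun j =>
    continuous_iff_continuousAt.2 fun x => (hw_deriv j x).continuousAt
  -- splitting the exponential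
  have hsplit : ∀ x y : ℝ, NormedSpace.exp ((D * (x - y)) • A)
      = NormedSpace.exp ((D * x) • A) * NormedSpace.exp ((-D * y) • A) := by
    intro x y
    have hcomm : Commute ((D * x) • A) ((-D * y) • A) :=
      ((Commute.refl A).smul_right (-D * y)).smul_left (D * x)
    have h : (D * (x - y)) • A = (D * x) • A + (-D * y) • A := by
      rw [← add_smul]; congr 1; ring
    rw [h]
    exact Matrix.exp_add_of_commute _ _ hcomm
  -- the integral term as a finite double sum
  have heq : ∀ x : ℝ,
      (∫ y in (0:ℝ)..x, (K ⬝ᵥ (NormedSpace.exp ((D * (x - y)) • A)).mulVec B) * uh y)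
      = ∑ i, ∑ j, K i * (NormedSpace.exp ((D * x) • A)) i j * w j x := by
    intro x
    have h1 : ∀ y : ℝ, (K ⬝ᵥ (NormedSpace.exp ((D * (x - y)) • A)).mulVec B) * uh y
        = ∑ i, ∑ j, K i * (NormedSpace.exp ((D * x) • A)) i j * b j y := by
      intro y
      rw [hsplit x y, ← Matrix.mulVec_mulVec]
      simp only [hbdef, dotProduct, Matrix.mulVec, Finset.sum_mul, Finset.mul_sum]
      apply Finset.sum_congr rfl; intro i _
      apply Finset.sum_congr rfl; intro j _
      apply Finset.sum_congr rfl; intro k _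
      ring
    simp only [h1]
    rw [intervalIntegral.integral_finset_sum (f := fun i y => ∑ j, K i * (NormedSpace.exp ((D * x) • A)) i j * b j y) (fun i _ => Continuous.intervalIntegrable
      (continuous_finset_sum _ fun j _ => continuous_const.mul (hb_cont j)) 0 x)]
    apply Finset.sum_congr rfl; intro i _
    rw [intervalIntegral.integral_finset_sum (f := fun j y => K i * (NormedSpace.exp ((D * x) • A)) i j * b j y) (fun j _ => Continuous.intervalIntegrable
      (continuous_const.mul (hb_cont j)) 0 x)]
    apply Finset.sum_congr rfl; intro j _
    rw [intervalIntegral.integral_const_mul]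
  have hwh2 : ∀ x : ℝ, wh x
      = uh x - (∑ i, ∑ j, K i * (NormedSpace.exp ((D * x) • A)) i j * X j)
        - D * ∑ i, ∑ j, K i * (NormedSpace.exp ((D * x) • A)) i j * w j x := by
    intro x
    rw [hwh x, heq x]
    congr 2
    simp [dotProduct, Matrix.mulVec, Finset.mul_sum, mul_assoc]
  -- quantities depending on the data
  set Iu := ∫ y in (0:ℝ)..1, |uh y| with hIudef
  set xs := ∑ j, |X j| with hxsdef
  have hIu0 : 0 ≤ Iu := intervalIntegral.integral_nonneg (by norm_num) fun _ _ => abs_nonneg _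
  have hxs0 : 0 ≤ xs := Finset.sum_nonneg fun _ _ => abs_nonneg _
  have hXj : ∀ j, |X j| ≤ xs := fun j =>
    Finset.single_le_sum (f := fun j => |X j|) (fun _ _ => abs_nonneg _) (Finset.mem_univ j)
  -- generic double-sum bound
  have hsum_bd : ∀ (f : Fin n → Fin n → ℝ) (M : ℝ), (∀ i j, |f i j| ≤ |K i| * M) →
      |∑ i, ∑ j, f i j| ≤ kB * (n : ℝ) * M := by
    intro f M h
    calc |∑ i, ∑ j, f i j| ≤ ∑ i, |∑ j, f i j| := Finset.abs_sum_le_sum_abs _ _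
      _ ≤ ∑ i, ∑ j, |f i j| := Finset.sum_le_sum fun i _ => Finset.abs_sum_le_sum_abs _ _
      _ ≤ ∑ i : Fin n, ∑ _j : Fin n, |K i| * M :=
          Finset.sum_le_sum fun i _ => Finset.sum_le_sum fun j _ => h i j
      _ = ∑ i : Fin n, (n : ℝ) * (|K i| * M) := by
          simp [Finset.sum_const, Finset.card_univ, nsmul_eq_mul]
      _ = kB * (n : ℝ) * M := by
          rw [← Finset.mul_sum, ← Finset.sum_mul, hkBdef]
          ring
  -- bounds on b and w
  have hb_bd : ∀ j, ∀ y ∈ Icc (0:ℝ) 1, |b j y| ≤ CS * bB * |uh y| := by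
    intro j y hy
    have h2 : |∑ k, (NormedSpace.exp ((-D * y) • A)) j k * B k| ≤ CS * bB := by
      calc |∑ k, (NormedSpace.exp ((-D * y) • A)) j k * B k|
          ≤ ∑ k, |(NormedSpace.exp ((-D * y) • A)) j k * B k| :=
            Finset.abs_sum_le_sum_abs _ _
        _ ≤ ∑ k, CS * |B k| := Finset.sum_le_sum fun k _ => by
            rw [abs_mul]
            exact mul_le_mul_of_nonneg_right (hCS y hy j k) (abs_nonneg _)
        _ = CS * bB := by rw [hbBdef, Finset.mul_sum]
    calc |b j y| = |uh y| * |∑ k, (NormedSpace.exp ((-D * y) • A)) j k * B k| := by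
          rw [hbdef]; exact abs_mul _ _
      _ ≤ |uh y| * (CS * bB) := mul_le_mul_of_nonneg_left h2 (abs_nonneg _)
      _ = CS * bB * |uh y| := by ring
  have hw_bd : ∀ j, ∀ x ∈ Icc (0:ℝ) 1, |w j x| ≤ CS * bB * Iu := by
    intro j x hx
    have h1 : |w j x| ≤ ∫ y in (0:ℝ)..x, |b j y| :=
      intervalIntegral.abs_integral_le_integral_abs hx.1
    have h2 : (∫ y in (0:ℝ)..x, |b j y|) ≤ ∫ y in (0:ℝ)..1, |b j y| := by
      have hadd := intervalIntegral.integral_add_adjacent_intervals (μ := volume)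
        ((hb_cont j).abs.intervalIntegrable 0 x) ((hb_cont j).abs.intervalIntegrable x 1)
      have h3 : 0 ≤ ∫ y in x..(1:ℝ), |b j y| :=
        intervalIntegral.integral_nonneg hx.2 fun _ _ => abs_nonneg _
      linarith
    have h3 : (∫ y in (0:ℝ)..1, |b j y|) ≤ ∫ y in (0:ℝ)..1, CS * bB * |uh y| := by
      apply intervalIntegral.integral_mono_on (by norm_num)
        ((hb_cont j).abs.intervalIntegrable 0 1)
        ((continuous_const.mul huc.abs).intervalIntegrable 0 1) (hb_bd j)
    rw [show (fun y => CS * bB * |uh y|) = fun y => (CS * bB) * |uh y| from rfl,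
      intervalIntegral.integral_const_mul] at h3
    calc |w j x| ≤ ∫ y in (0:ℝ)..x, |b j y| := h1
      _ ≤ ∫ y in (0:ℝ)..1, |b j y| := h2
      _ ≤ CS * bB * Iu := h3
  -- pointwise bound for wh
  have habs1 : ∀ x ∈ Icc (0:ℝ) 1, |wh x| ≤ |uh x| + c1 * xs + c2 * Iu := by
    intro x hx
    have hS1 : |∑ i, ∑ j, K i * (NormedSpace.exp ((D * x) • A)) i j * X j|
        ≤ kB * (n : ℝ) * (CE * xs) :=
      hsum_bd _ _ fun i j => prod_bd _ _ _ _ _ (hCE x hx i j) (hXj j)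
    have hS2 : |∑ i, ∑ j, K i * (NormedSpace.exp ((D * x) • A)) i j * w j x|
        ≤ kB * (n : ℝ) * (CE * (CS * bB * Iu)) :=
      hsum_bd _ _ fun i j => prod_bd _ _ _ _ _ (hCE x hx i j) (hw_bd j x hx)
    have ht : ∀ a p q : ℝ, |a - p - q| ≤ |a| + |p| + |q| := by
      intro a p q
      calc |a - p - q| = |a + (-p) + (-q)| := by ring_nf
        _ ≤ |a + (-p)| + |(-q)| := abs_add_le _ _
        _ ≤ |a| + |(-p)| + |(-q)| := by linarith [abs_add_le a (-p)]
        _ = |a| + |p| + |q| := by rw [abs_neg, abs_neg]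
    calc |wh x| ≤ |uh x| + |∑ i, ∑ j, K i * (NormedSpace.exp ((D * x) • A)) i j * X j|
          + |D * ∑ i, ∑ j, K i * (NormedSpace.exp ((D * x) • A)) i j * w j x| := by
          rw [hwh2 x]; exact ht _ _ _
      _ ≤ |uh x| + kB * (n : ℝ) * (CE * xs)
          + D * (kB * (n : ℝ) * (CE * (CS * bB * Iu))) := by
          rw [abs_mul, abs_of_pos hD]
          have := mul_le_mul_of_nonneg_left hS2 hD.le
          linarith
      _ = |uh x| + c1 * xs + c2 * Iu := by rw [hc1def, hc2def]; ring
  have hpt1 : ∀ x ∈ Icc (0:ℝ) 1,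
      (wh x) ^ 2 ≤ 3 * (uh x) ^ 2 + (3 * (c1 * xs) ^ 2 + 3 * (c2 * Iu) ^ 2) := by
    intro x hx
    have h := habs1 x hx
    have h2 : |wh x| ^ 2 ≤ (|uh x| + c1 * xs + c2 * Iu) ^ 2 :=
      pow_le_pow_left₀ (abs_nonneg _) h 2
    have h3 : (|uh x| + c1 * xs + c2 * Iu) ^ 2
        ≤ 3 * |uh x| ^ 2 + (3 * (c1 * xs) ^ 2 + 3 * (c2 * Iu) ^ 2) := by
      linarith [sq_nonneg (|uh x| - c1 * xs), sq_nonneg (|uh x| - c2 * Iu),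
        sq_nonneg (c1 * xs - c2 * Iu)]
    linarith [sq_abs (wh x), sq_abs (uh x), h2, h3]
  have hwh_cont : Continuous wh := by
    rw [funext hwh2]
    refine (huc.sub ?_).sub (continuous_const.mul ?_)
    · exact continuous_finset_sum _ fun i _ => continuous_finset_sum _ fun j _ =>
        (continuous_const.mul (entry_continuous A D i j)).mul continuous_const
    · exact continuous_finset_sum _ fun i _ => continuous_finset_sum _ fun j _ =>
        (continuous_const.mul (entry_continuous A D i j)).mul (hw_cont j)
  have hu2 : 0 ≤ ∫ x in (0:ℝ)..1, (uh x) ^ 2 :=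
    intervalIntegral.integral_nonneg (by norm_num) fun _ _ => sq_nonneg _
  have hud2 : 0 ≤ ∫ x in (0:ℝ)..1, (deriv uh x) ^ 2 :=
    intervalIntegral.integral_nonneg (by norm_num) fun _ _ => sq_nonneg _
  have hX2 : 0 ≤ ∑ i, (X i) ^ 2 := Finset.sum_nonneg fun _ _ => sq_nonneg _
  have hIusq : Iu ^ 2 ≤ ∫ x in (0:ℝ)..1, (uh x) ^ 2 := sq_integral_abs_le uh huc
  have hxssq : xs ^ 2 ≤ (n : ℝ) * ∑ j, (X j) ^ 2 := by
    have h := sq_sum_le_card_mul_sum_sq (s := (Finset.univ : Finset (Fin n)))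
      (f := fun j => |X j|)
    simpa [sq_abs, Finset.card_univ] using h
  constructor
  · -- first bound
    have hint1 : (∫ x in (0:ℝ)..1, (wh x) ^ 2)
        ≤ ∫ x in (0:ℝ)..1, (3 * (uh x) ^ 2 + (3 * (c1 * xs) ^ 2 + 3 * (c2 * Iu) ^ 2)) :=
      intervalIntegral.integral_mono_on (by norm_num)
        ((hwh_cont.pow 2).intervalIntegrable 0 1)
        (((continuous_const.mul (huc.pow 2)).add continuous_const).intervalIntegrable 0 1) hpt1
    have hint2 : (∫ x in (0:ℝ)..1, (3 * (uh x) ^ 2 + (3 * (c1 * xs) ^ 2 + 3 * (c2 * Iu) ^ 2)))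
        = 3 * (∫ x in (0:ℝ)..1, (uh x) ^ 2) + (3 * (c1 * xs) ^ 2 + 3 * (c2 * Iu) ^ 2) := by
      rw [intervalIntegral.integral_add (f := fun x => 3 * (uh x) ^ 2) (g := fun _ => 3 * (c1 * xs) ^ 2 + 3 * (c2 * Iu) ^ 2) ((continuous_const.mul (huc.pow 2)).intervalIntegrable 0 1)
        intervalIntegrable_const, intervalIntegral.integral_const_mul,
        intervalIntegral.integral_const]
      simp
    rw [hint2] at hint1
    have h1 : c1 ^ 2 * xs ^ 2 ≤ c1 ^ 2 * ((n : ℝ) * ∑ j, (X j) ^ 2) :=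
      mul_le_mul_of_nonneg_left hxssq (sq_nonneg c1)
    have h2 : c2 ^ 2 * Iu ^ 2 ≤ c2 ^ 2 * ∫ x in (0:ℝ)..1, (uh x) ^ 2 :=
      mul_le_mul_of_nonneg_left hIusq (sq_nonneg c2)
    have h3 : 0 ≤ c1 ^ 2 * ((n : ℝ) * ∫ x in (0:ℝ)..1, (uh x) ^ 2) :=
      mul_nonneg (sq_nonneg c1) (mul_nonneg (Nat.cast_nonneg n) hu2)
    have h4 : 0 ≤ c2 ^ 2 * ∑ i, (X i) ^ 2 := mul_nonneg (sq_nonneg c2) hX2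
    linarith [hint1, h1, h2, h3, h4, hX2, hu2]
  · -- derivative bound
    have hS1D : ∀ x : ℝ, HasDerivAt
        (fun x => ∑ i, ∑ j, K i * (NormedSpace.exp ((D * x) • A)) i j * X j)
        (∑ i, ∑ j, K i * (D * (A * NormedSpace.exp ((D * x) • A)) i j) * X j) x := by
      intro x
      apply HasDerivAt.fun_sum; intro i _
      apply HasDerivAt.fun_sum; intro j _
      exact ((entry_hasDerivAt A D i j x).const_mul (K i)).mul_const (X j)
    have hS2D : ∀ x : ℝ, HasDerivAt
        (fun x => ∑ i, ∑ j, K i * (NormedSpace.exp ((D * x) • A)) i j * w j x)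
        (∑ i, ∑ j, (K i * (D * (A * NormedSpace.exp ((D * x) • A)) i j) * w j x
          + K i * (NormedSpace.exp ((D * x) • A)) i j * b j x)) x := by
      intro x
      apply HasDerivAt.fun_sum; intro i _
      apply HasDerivAt.fun_sum; intro j _
      exact ((entry_hasDerivAt A D i j x).const_mul (K i)).mul (hw_deriv j x)
    have hwhD : ∀ x : ℝ, HasDerivAt wh
        (deriv uh x - (∑ i, ∑ j, K i * (D * (A * NormedSpace.exp ((D * x) • A)) i j) * X j)
          - D * ∑ i, ∑ j, (K i * (D * (A * NormedSpace.exp ((D * x) • A)) i j) * w j x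
            + K i * (NormedSpace.exp ((D * x) • A)) i j * b j x)) x := by
      intro x
      rw [funext hwh2]
      exact ((((huh.differentiable one_ne_zero) x).hasDerivAt.sub (hS1D x)).sub
        ((hS2D x).const_mul D))
    have hdw : ∀ x : ℝ, deriv wh x
        = deriv uh x - (∑ i, ∑ j, K i * (D * (A * NormedSpace.exp ((D * x) • A)) i j) * X j)
          - D * ∑ i, ∑ j, (K i * (D * (A * NormedSpace.exp ((D * x) • A)) i j) * w j x
            + K i * (NormedSpace.exp ((D * x) • A)) i j * b j x) :=
      fun x => (hwhD x).deriv
    have habs2 : ∀ x ∈ Icc (0:ℝ) 1,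
        |deriv wh x| ≤ |deriv uh x| + c3 * xs + (c4 * Iu + c2 * |uh x|) := by
      intro x hx
      have hDA : ∀ i j, |D * (A * NormedSpace.exp ((D * x) • A)) i j| ≤ D * CA := by
        intro i j
        rw [abs_mul, abs_of_pos hD]
        exact mul_le_mul_of_nonneg_left (hCA x hx i j) hD.le
      have hS1 : |∑ i, ∑ j, K i * (D * (A * NormedSpace.exp ((D * x) • A)) i j) * X j|
          ≤ kB * (n : ℝ) * ((D * CA) * xs) :=
        hsum_bd _ _ fun i j => prod_bd _ _ _ _ _ (hDA i j) (hXj j)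
      have hS2 : |∑ i, ∑ j, (K i * (D * (A * NormedSpace.exp ((D * x) • A)) i j) * w j x
            + K i * (NormedSpace.exp ((D * x) • A)) i j * b j x)|
          ≤ kB * (n : ℝ) * ((D * CA) * (CS * bB * Iu) + CE * (CS * bB * |uh x|)) := by
        apply hsum_bd _ _ fun i j => ?_
        calc |K i * (D * (A * NormedSpace.exp ((D * x) • A)) i j) * w j x
              + K i * (NormedSpace.exp ((D * x) • A)) i j * b j x|
            ≤ |K i * (D * (A * NormedSpace.exp ((D * x) • A)) i j) * w j x|
              + |K i * (NormedSpace.exp ((D * x) • A)) i j * b j x| := abs_add_le _ _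
          _ ≤ |K i| * ((D * CA) * (CS * bB * Iu)) + |K i| * (CE * (CS * bB * |uh x|)) := by
              have h1 := prod_bd (K i) _ _ _ _ (hDA i j) (hw_bd j x hx)
              have h2 := prod_bd (K i) _ _ _ _ (hCE x hx i j)
                ((abs_abs (b j x) ▸ hb_bd j x hx : |b j x| ≤ CS * bB * |uh x|))
              linarith
          _ = |K i| * ((D * CA) * (CS * bB * Iu) + CE * (CS * bB * |uh x|)) := by ring
      have ht : ∀ a p q : ℝ, |a - p - q| ≤ |a| + |p| + |q| := by
        intro a p q
        calc |a - p - q| = |a + (-p) + (-q)| := by ring_nf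
          _ ≤ |a + (-p)| + |(-q)| := abs_add_le _ _
          _ ≤ |a| + |(-p)| + |(-q)| := by linarith [abs_add_le a (-p)]
          _ = |a| + |p| + |q| := by rw [abs_neg, abs_neg]
      calc |deriv wh x|
          ≤ |deriv uh x|
            + |∑ i, ∑ j, K i * (D * (A * NormedSpace.exp ((D * x) • A)) i j) * X j|
            + |D * ∑ i, ∑ j, (K i * (D * (A * NormedSpace.exp ((D * x) • A)) i j) * w j x
              + K i * (NormedSpace.exp ((D * x) • A)) i j * b j x)| := by
            rw [hdw x]; exact ht _ _ _
        _ ≤ |deriv uh x| + kB * (n : ℝ) * ((D * CA) * xs)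
            + D * (kB * (n : ℝ) * ((D * CA) * (CS * bB * Iu) + CE * (CS * bB * |uh x|))) := by
            rw [abs_mul, abs_of_pos hD]
            have := mul_le_mul_of_nonneg_left hS2 hD.le
            linarith
        _ = |deriv uh x| + c3 * xs + (c4 * Iu + c2 * |uh x|) := by
            rw [hc2def, hc3def, hc4def]; ring
    have hpt2 : ∀ x ∈ Icc (0:ℝ) 1,
        (deriv wh x) ^ 2 ≤ 4 * (deriv uh x) ^ 2 + 4 * c2 ^ 2 * (uh x) ^ 2
          + (4 * (c3 * xs) ^ 2 + 4 * (c4 * Iu) ^ 2) := by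
      intro x hx
      have h := habs2 x hx
      have h2 : |deriv wh x| ^ 2 ≤ (|deriv uh x| + c3 * xs + (c4 * Iu + c2 * |uh x|)) ^ 2 :=
        pow_le_pow_left₀ (abs_nonneg _) h 2
      have h3 : (|deriv uh x| + c3 * xs + (c4 * Iu + c2 * |uh x|)) ^ 2
          ≤ 4 * |deriv uh x| ^ 2 + 4 * (c2 * |uh x|) ^ 2
            + (4 * (c3 * xs) ^ 2 + 4 * (c4 * Iu) ^ 2) := by
        linarith [sq_nonneg (|deriv uh x| - c3 * xs), sq_nonneg (|deriv uh x| - c4 * Iu),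
          sq_nonneg (|deriv uh x| - c2 * |uh x|), sq_nonneg (c3 * xs - c4 * Iu),
          sq_nonneg (c3 * xs - c2 * |uh x|), sq_nonneg (c4 * Iu - c2 * |uh x|)]
      have h4 : (c2 * |uh x|) ^ 2 = c2 ^ 2 * (uh x) ^ 2 := by
        rw [mul_pow, sq_abs]
      linarith [sq_abs (deriv wh x), sq_abs (deriv uh x), h2, h3, h4]
    have hdw_cont : Continuous (deriv wh) := by
      rw [funext hdw]
      refine (hucd.sub ?_).sub (continuous_const.mul ?_)
      · exact continuous_finset_sum _ fun i _ => continuous_finset_sum _ fun j _ =>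
          (continuous_const.mul (continuous_const.mul (hAE_cont i j))).mul continuous_const
      · exact continuous_finset_sum _ fun i _ => continuous_finset_sum _ fun j _ =>
          ((continuous_const.mul (continuous_const.mul (hAE_cont i j))).mul (hw_cont j)).add
            ((continuous_const.mul (entry_continuous A D i j)).mul (hb_cont j))
    have hint1 : (∫ x in (0:ℝ)..1, (deriv wh x) ^ 2)
        ≤ ∫ x in (0:ℝ)..1, (4 * (deriv uh x) ^ 2 + 4 * c2 ^ 2 * (uh x) ^ 2
          + (4 * (c3 * xs) ^ 2 + 4 * (c4 * Iu) ^ 2)) :=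
      intervalIntegral.integral_mono_on (by norm_num)
        ((hdw_cont.pow 2).intervalIntegrable 0 1)
        ((((continuous_const.mul (hucd.pow 2)).add
          (continuous_const.mul (huc.pow 2))).add continuous_const).intervalIntegrable 0 1) hpt2
    have hint2 : (∫ x in (0:ℝ)..1, (4 * (deriv uh x) ^ 2 + 4 * c2 ^ 2 * (uh x) ^ 2
          + (4 * (c3 * xs) ^ 2 + 4 * (c4 * Iu) ^ 2)))
        = 4 * (∫ x in (0:ℝ)..1, (deriv uh x) ^ 2) + 4 * c2 ^ 2 * (∫ x in (0:ℝ)..1, (uh x) ^ 2)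
          + (4 * (c3 * xs) ^ 2 + 4 * (c4 * Iu) ^ 2) := by
      rw [intervalIntegral.integral_add (f := fun x => 4 * (deriv uh x) ^ 2 + 4 * c2 ^ 2 * (uh x) ^ 2) (g := fun _ => 4 * (c3 * xs) ^ 2 + 4 * (c4 * Iu) ^ 2) (((continuous_const.mul (hucd.pow 2)).add
          (continuous_const.mul (huc.pow 2))).intervalIntegrable 0 1) intervalIntegrable_const,
        intervalIntegral.integral_add (f := fun x => 4 * (deriv uh x) ^ 2) (g := fun x => 4 * c2 ^ 2 * (uh x) ^ 2) ((continuous_const.mul (hucd.pow 2)).intervalIntegrable 0 1)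
          ((continuous_const.mul (huc.pow 2)).intervalIntegrable 0 1),
        intervalIntegral.integral_const_mul, intervalIntegral.integral_const_mul,
        intervalIntegral.integral_const]
      simp
    rw [hint2] at hint1
    have h1 : c3 ^ 2 * xs ^ 2 ≤ c3 ^ 2 * ((n : ℝ) * ∑ j, (X j) ^ 2) :=
      mul_le_mul_of_nonneg_left hxssq (sq_nonneg c3)
    have h2 : c4 ^ 2 * Iu ^ 2 ≤ c4 ^ 2 * ∫ x in (0:ℝ)..1, (uh x) ^ 2 :=
      mul_le_mul_of_nonneg_left hIusq (sq_nonneg c4)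
    have h3 : 0 ≤ c3 ^ 2 * ((n : ℝ) * ∫ x in (0:ℝ)..1, (uh x) ^ 2) :=
      mul_nonneg (sq_nonneg c3) (mul_nonneg (Nat.cast_nonneg n) hu2)
    have h3' : 0 ≤ c3 ^ 2 * ((n : ℝ) * ∫ x in (0:ℝ)..1, (deriv uh x) ^ 2) :=
      mul_nonneg (sq_nonneg c3) (mul_nonneg (Nat.cast_nonneg n) hud2)
    have h4 : 0 ≤ c4 ^ 2 * ∑ i, (X i) ^ 2 := mul_nonneg (sq_nonneg c4) hX2
    have h4' : 0 ≤ c4 ^ 2 * ∫ x in (0:ℝ)..1, (deriv uh x) ^ 2 :=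
      mul_nonneg (sq_nonneg c4) hud2
    have h5 : 0 ≤ c2 ^ 2 * ∑ i, (X i) ^ 2 := mul_nonneg (sq_nonneg c2) hX2
    have h5' : 0 ≤ c2 ^ 2 * ∫ x in (0:ℝ)..1, (deriv uh x) ^ 2 :=
      mul_nonneg (sq_nonneg c2) hud2
    linarith [hint1, h1, h2, h3, h3', h4, h4', h5, h5', hX2, hu2, hud2]
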